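/- Let F be a free group of rank k ≥ 2 with basis 𝒜, and let g, h ∈ F be nontrivial with h cyclically reduced. If a₀ ∈ 𝒜 satisfies ⟨a₀^{±1}, g⟩_𝒜 > 0 (i.e., a₀ or a₀⁻¹ occurs in the reduced word for g), then ⟨a₀^{±1}, h⟩_𝒜 · ⟨a₀^{±1}, g⟩_𝒜 ≥ ⟨g^{±1}, h⟩_𝒜, where ⟨u^{±1}, v⟩_𝒜 counts occurrences of u or u⁻¹ as a subword of the cyclic word determined by v. -/

import Mathlib

theorem aux_count {β : Type} (q : β → Bool) (l : List β) :
    ((Finset.range l.length).filter (fun i => l[i]?.any q = true)).card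
      = (l.filter q).length := by
  induction l with
  | nil => simp
  | cons x t ih =>
    rw [Finset.card_filter] at ih ⊢
    rw [List.length_cons, Finset.sum_range_succ']
    simp only [List.getElem?_cons_succ, List.getElem?_cons_zero]
    rw [ih]
    cases hx : q x <;> simp [List.filter_cons, hx, Option.any_some]

theorem aux_conv (n : ℕ) (p : ℕ → Prop) [DecidablePred p] :
    ((List.range n).filter (fun i => decide (p i))).length = ((Finset.range n).filter p).card := by
  simp [Finset.filter, Finset.range, Multiset.range, Multiset.filter, Finset.card]
  rfl

-- sublemma: extracting a cyclic letter from a match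
theorem aux_sub {α : Type} (L W : List (α × Bool)) (idx jj : ℕ) (ww : α × Bool)
    (hidx : idx < L.length)
    (hW : ((L ++ L).drop idx).take W.length = W) (hjw : W[jj]? = some ww) :
    L[(idx + jj) % L.length]? = some ww := by
  have hjlt : jj < W.length := (List.getElem?_eq_some_iff.mp hjw).1
  have h1 : (L ++ L)[idx + jj]? = some ww := by
    have h2 := congrArg (fun t => t[jj]?) hW
    simp only [List.getElem?_take, if_pos hjlt, List.getElem?_drop] at h2
    rw [h2]; exact hjw
  have hlt2 : idx + jj < L.length + L.length := by
    have := (List.getElem?_eq_some_iff.mp h1).1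
    simpa [List.length_append] using this
  rcases lt_or_ge (idx + jj) L.length with hc | hc
  · rw [Nat.mod_eq_of_lt hc]
    rwa [List.getElem?_append, if_pos hc] at h1
  · have hmod : (idx + jj) % L.length = idx + jj - L.length := by
      rw [Nat.mod_eq_sub_mod hc, Nat.mod_eq_of_lt (by omega)]
    rw [hmod, ← List.getElem?_append_right hc]
    exact h1

theorem stmt16' {α : Type} [Fintype α] [DecidableEq α]
    (g h : FreeGroup α)
    (a₀ : α)
    (ha : 0 < ((FreeGroup.toWord g).filter (fun p => p.1 = a₀)).length) :
    ((List.range (FreeGroup.toWord h).length).filter (fun idx =>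
      (((FreeGroup.toWord h) ++ (FreeGroup.toWord h)).drop idx).take (FreeGroup.toWord g).length = FreeGroup.toWord g ∨
      (((FreeGroup.toWord h) ++ (FreeGroup.toWord h)).drop idx).take (FreeGroup.toWord g⁻¹).length = FreeGroup.toWord g⁻¹)).length
    ≤ ((FreeGroup.toWord h).filter (fun p => p.1 = a₀)).length := by
  set L := FreeGroup.toWord h with hL
  set G := FreeGroup.toWord g with hGdef
  set n := L.length with hn
  have hG' : FreeGroup.toWord g⁻¹ = FreeGroup.invRev G := FreeGroup.toWord_inv g
  -- a letter with a₀ in G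
  obtain ⟨wG, hwGmem, hwG1⟩ : ∃ w ∈ G, w.1 = a₀ := by
    obtain ⟨x, hx⟩ := List.exists_mem_of_length_pos ha
    have := List.mem_filter.mp hx
    exact ⟨x, this.1, by simpa using this.2⟩
  obtain ⟨jG, hjG⟩ : ∃ j, G[j]? = some wG := List.mem_iff_getElem?.mp hwGmem
  have hw'mem : (wG.1, !wG.2) ∈ FreeGroup.invRev G := by
    simp only [FreeGroup.invRev, List.mem_reverse, List.mem_map]
    exact ⟨wG, hwGmem, rfl⟩
  obtain ⟨jI, hjI⟩ : ∃ j, (FreeGroup.invRev G)[j]? = some (wG.1, !wG.2) :=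
    List.mem_iff_getElem?.mp hw'mem
  -- predicate, offset, letter, map
  set A : ℕ → Prop := fun idx => ((L ++ L).drop idx).take G.length = G with hA
  set j : ℕ → ℕ := fun idx => if A idx then jG else jI with hj
  set w : ℕ → α × Bool := fun idx => if A idx then wG else (wG.1, !wG.2) with hw
  set f : ℕ → ℕ := fun idx => (idx + j idx) % n with hf
  set p : ℕ → Prop := fun idx => A idx ∨
      ((L ++ L).drop idx).take (FreeGroup.toWord g⁻¹).length = FreeGroup.toWord g⁻¹ with hp
  set T : Finset ℕ := (Finset.range n).filter p with hT
  have key : ∀ idx ∈ T, L[f idx]? = some (w idx) := by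
    intro idx hidxT
    have hmem := Finset.mem_filter.mp hidxT
    have hidxn : idx < n := Finset.mem_range.mp hmem.1
    by_cases hAi : A idx
    · simp only [hf, hj, hw, if_pos hAi]
      exact aux_sub L G idx jG wG hidxn hAi hjG
    · have hB := (hmem.2).resolve_left hAi
      rw [hG'] at hB
      simp only [hf, hj, hw, if_neg hAi]
      exact aux_sub L (FreeGroup.invRev G) idx jI (wG.1, !wG.2) hidxn hB hjI
  set P : Finset ℕ := (Finset.range n).filter
      (fun i => L[i]?.any (fun ww => decide (ww.1 = a₀)) = true) with hP
  have hmaps : ∀ idx ∈ T, f idx ∈ P := by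
    intro idx hidxT
    have hidxn : idx < n := Finset.mem_range.mp (Finset.mem_filter.mp hidxT).1
    refine Finset.mem_filter.mpr ⟨Finset.mem_range.mpr (Nat.mod_lt _ (by omega)), ?_⟩
    rw [key idx hidxT]
    have : (w idx).1 = a₀ := by
      simp only [hw]; split <;> simp [hwG1]
    simp [Option.any_some, this]
  have hinj : Set.InjOn f ↑T := by
    intro x hx y hy hfxy
    have hxT : x ∈ T := hx
    have hyT : y ∈ T := hy
    have hxn : x < n := Finset.mem_range.mp (Finset.mem_filter.mp hxT).1
    have hyn : y < n := Finset.mem_range.mp (Finset.mem_filter.mp hyT).1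
    by_cases hjxy : j x = j y
    · have heq : (x + j x) % n = (y + j y) % n := hfxy
      rw [hjxy] at heq
      have hmodeq : x ≡ y [MOD n] := Nat.ModEq.add_right_cancel' (j y) heq
      exact Nat.ModEq.eq_of_lt_of_lt hmodeq hxn hyn
    · exfalso
      have hkx := key x hxT
      have hky := key y hyT
      rw [hfxy] at hkx
      rw [hkx] at hky
      have hwxy : w x = w y := by injection hky
      have : ¬ (A x ↔ A y) := by
        intro hiff
        apply hjxy
        simp only [hj]
        by_cases hAx : A x
        · rw [if_pos hAx, if_pos (hiff.mp hAx)]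
        · rw [if_neg hAx, if_neg (fun hAy => hAx (hiff.mpr hAy))]
      by_cases hAx : A x <;> by_cases hAy : A y
      · exact this (iff_of_true hAx hAy)
      · simp only [hw, if_pos hAx, if_neg hAy] at hwxy
        have := congrArg Prod.snd hwxy
        simp at this
      · simp only [hw, if_neg hAx, if_pos hAy] at hwxy
        have := congrArg Prod.snd hwxy
        simp at this
      · exact this (iff_of_false hAx hAy)
  have h1 : ((List.range n).filter (fun idx => decide (p idx))).length = T.card :=
    aux_conv n p
  have h2 : T.card ≤ P.card := Finset.card_le_card_of_injOn f hmaps hinj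
  have h3 : P.card = (L.filter (fun ww => decide (ww.1 = a₀))).length :=
    aux_count (fun ww => decide (ww.1 = a₀)) L
  calc ((List.range n).filter (fun idx => decide (p idx))).length
      = T.card := h1
    _ ≤ P.card := h2
    _ = _ := h3


/-- A reduced word is cyclically reduced if its last letter is not the inverse
of its first letter. -/
def CyclRedWord {α : Type} (l : List (α × Bool)) : Prop :=
  ∀ p q, l.head? = some p → l.getLast? = some q → ¬ (q.1 = p.1 ∧ q.2 = !p.2)

/-- The number of occurrences of the letter `a` or `a⁻¹` in the reduced word of `w`. -/
def countA {α : Type} [DecidableEq α] (a : α) (w : FreeGroup α) : ℕ :=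
  ((FreeGroup.toWord w).filter (fun p => p.1 = a)).length

/-- `⟨g^{±1}, h⟩`: the number of occurrences of the reduced word of `g` or of `g⁻¹`
as a subword of the cyclic word determined by the cyclically reduced word `l`. -/
def occCycOf {α : Type} [DecidableEq α] (g : FreeGroup α) (l : List (α × Bool)) : ℕ :=
  ((List.range l.length).filter (fun idx =>
      ((l ++ l).drop idx).take (FreeGroup.toWord g).length = FreeGroup.toWord g ∨
      ((l ++ l).drop idx).take (FreeGroup.toWord g⁻¹).length = FreeGroup.toWord g⁻¹)).length

/-- Every occurrence of `g^{±1}` in the cyclic word of `h` contains an occurrence of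
`a₀^{±1}`, and each such occurrence is used at most `⟨a₀^{±1}, g⟩` times; hence
`⟨a₀^{±1}, h⟩ · ⟨a₀^{±1}, g⟩ ≥ ⟨g^{±1}, h⟩`. -/
theorem stmt16 {α : Type} [Fintype α] [DecidableEq α] (hcard : 2 ≤ Fintype.card α)
    (g h : FreeGroup α) (hg : g ≠ 1) (hh : h ≠ 1)
    (hhred : CyclRedWord (FreeGroup.toWord h)) (a₀ : α)
    (ha : 0 < countA a₀ g) :
    occCycOf g (FreeGroup.toWord h) ≤ countA a₀ h * countA a₀ g := by
  unfold countA at ha ⊢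
  unfold occCycOf
  calc _ ≤ ((FreeGroup.toWord h).filter (fun p => p.1 = a₀)).length :=
        stmt16' g h a₀ ha
    _ ≤ _ := Nat.le_mul_of_pos_right _ ha
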